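/- Let f(t) ∈ ℤ[t] be a monic polynomial all of whose complex roots lie on the unit circle. If f(1) = 4 and deg(f(t)) ≤ f(1) − 1 = 3, then f(t) = Φ_2(t)² = (1+t)² or f(t) = Φ_2(t)Φ_4(t) = 1 + t + t² + t³; in particular, f(t) is of type CI. -/

import Mathlib

open Polynomial

/-- `Ψ_m(t) = 1 + t + ⋯ + t^{m-1} ∈ ℤ[t]`. -/
noncomputable def Psi (m : ℕ) : Polynomial ℤ :=
  ∑ i ∈ Finset.range m, Polynomial.X ^ i

/-- A polynomial is of type CI if it is a (possibly empty) product `Ψ_{m_1} ⋯ Ψ_{m_r}`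
with all `m_i` positive. -/
def IsTypeCI (f : Polynomial ℤ) : Prop :=
  ∃ l : List ℕ, (∀ m ∈ l, 0 < m) ∧ f = (l.map Psi).prod

/-- All complex roots of the integer polynomial `h` lie on the unit circle. -/
def RootsOnUnitCircle (h : Polynomial ℤ) : Prop :=
  ∀ z : ℂ, Polynomial.aeval z h = 0 → ‖z‖ = 1

lemma psi_two : Psi 2 = X + 1 := by
  simp [Psi, Finset.sum_range_succ]; ring

lemma psi_four : Psi 4 = 1 + X + X ^ 2 + X ^ 3 := by
  simp [Psi, Finset.sum_range_succ]

lemma cyc4 : Polynomial.cyclotomic 4 ℤ = X ^ 2 + 1 := by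
  have h4 : (4 : ℕ) = 2 ^ (1 + 1) := rfl
  rw [h4, cyclotomic_prime_pow_eq_geom_sum Nat.prime_two]
  simp [Finset.sum_range_succ]; ring

/-- A monic integer polynomial with all roots on the unit circle, `f(1) = 4` and
`deg f ≤ 3`, equals `Φ_2² = (1+t)²` or `Φ_2Φ_4 = 1+t+t²+t³`; in particular it is
of type CI. -/
theorem kronecker_value_four (f : Polynomial ℤ) (hmon : f.Monic)
    (hroots : RootsOnUnitCircle f) (h1 : f.eval 1 = 4) (hdeg : f.natDegree ≤ 3) :
    (f = Polynomial.cyclotomic 2 ℤ ^ 2 ∨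
      f = Polynomial.cyclotomic 2 ℤ * Polynomial.cyclotomic 4 ℤ) ∧ IsTypeCI f := by
  classical
  set F := f.map (Int.castRingHom ℂ) with hFdef
  have hFm : F.Monic := hmon.map _
  have hdegF : F.natDegree = f.natDegree := hmon.natDegree_map _
  have hsp : F.Splits := IsAlgClosed.splits F
  have hcard : F.roots.card = f.natDegree := by
    rw [← hdegF]; exact splits_iff_card_roots.mp hsp
  have hFeq : F = (F.roots.map fun a => X - C a).prod :=
    hsp.eq_prod_roots_of_monic hFm
  have hroot : ∀ r ∈ F.roots, r * (starRingEnd ℂ) r = 1 := by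
    intro r hr
    have h0 : Polynomial.aeval r f = 0 := by
      have := isRoot_of_mem_roots hr
      simpa [hFdef, aeval_def, eval_map] using this
    have h1 := hroots r h0
    rw [Complex.mul_conj]
    norm_cast
    rw [← Complex.sq_norm, h1]; norm_num
  have hcoeff : ∀ k, F.coeff k = (f.coeff k : ℂ) := by
    intro k; simp [hFdef, coeff_map]
  have hconj : ∀ k, (starRingEnd ℂ) ((f.coeff k : ℂ)) = (f.coeff k : ℂ) := by
    intro k; simp
  interval_cases hn : f.natDegree
  · -- degree 0
    exfalso
    rw [hmon.natDegree_eq_zero.mp hn] at h1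
    simp at h1
  · -- degree 1
    exfalso
    obtain ⟨r, hr⟩ := Multiset.card_eq_one.mp hcard
    have hexp : F = C (-r) + X := by
      rw [hFeq, hr]; simp [Multiset.map_singleton, Multiset.prod_singleton]; ring
    have e0 : (f.coeff 0 : ℂ) = -r := by
      rw [← hcoeff, hexp]; simp
    have e0' : (f.coeff 0 : ℂ) = -(starRingEnd ℂ) r := by
      rw [← hconj 0, e0]; simp
    have hrr := hroot r (by rw [hr]; exact Multiset.mem_singleton_self r)
    have hc2 : f.coeff 0 * f.coeff 0 = 1 := by
      have : (f.coeff 0 : ℂ) * (f.coeff 0 : ℂ) = 1 :=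
        calc (f.coeff 0 : ℂ) * (f.coeff 0 : ℂ) = (-r) * (-(starRingEnd ℂ) r) := by
              rw [← e0, ← e0']
          _ = 1 := by linear_combination hrr
      exact_mod_cast this
    have hsum : f.coeff 0 + f.coeff 1 = 4 := by
      have hf := f.as_sum_range' 2 (by omega)
      rw [hf] at h1
      simpa [Finset.sum_range_succ, eval_monomial] using h1
    have hlead : f.coeff 1 = 1 := by
      have := hmon.coeff_natDegree; rwa [hn] at this
    have h3 : f.coeff 0 = 3 := by omega
    rw [h3] at hc2; omega
  · -- degree 2
    obtain ⟨r, s, hrs⟩ := Multiset.card_eq_two.mp hcard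
    have hexp : F = C (r * s) + C (-(r + s)) * X + X ^ 2 := by
      rw [hFeq, hrs]
      simp only [Multiset.insert_eq_cons, Multiset.map_cons, Multiset.map_singleton,
        Multiset.prod_cons, Multiset.prod_singleton, map_neg, map_add, map_mul]
      ring
    have e0 : (f.coeff 0 : ℂ) = r * s := by
      rw [← hcoeff, hexp]; simp [coeff_X_pow, coeff_mul_X_pow', coeff_C]
    have e1 : (f.coeff 1 : ℂ) = -(r + s) := by
      rw [← hcoeff, hexp]; simp [coeff_X_pow, coeff_mul_X_pow', coeff_C]
    have e0' : (f.coeff 0 : ℂ) = (starRingEnd ℂ) r * (starRingEnd ℂ) s := by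
      rw [← hconj 0, e0]; simp
    have e1' : (f.coeff 1 : ℂ) = -((starRingEnd ℂ) r + (starRingEnd ℂ) s) := by
      rw [← hconj 1, e1]; simp
    have hrr := hroot r (by rw [hrs]; simp)
    have hss := hroot s (by rw [hrs]; simp)
    have hc2 : f.coeff 0 * f.coeff 0 = 1 := by
      have : (f.coeff 0 : ℂ) * (f.coeff 0 : ℂ) = 1 :=
        calc (f.coeff 0 : ℂ) * (f.coeff 0 : ℂ)
            = (r * s) * ((starRingEnd ℂ) r * (starRingEnd ℂ) s) := by rw [← e0, ← e0']
          _ = 1 := by linear_combination ((starRingEnd ℂ) s * s) * hrr + hss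
      exact_mod_cast this
    have hac : f.coeff 1 * f.coeff 0 = f.coeff 1 := by
      have : (f.coeff 1 : ℂ) * (f.coeff 0 : ℂ) = (f.coeff 1 : ℂ) :=
        calc (f.coeff 1 : ℂ) * (f.coeff 0 : ℂ)
            = -((starRingEnd ℂ) r + (starRingEnd ℂ) s) * (r * s) := by rw [← e1', ← e0]
          _ = -(r + s) := by linear_combination (-s) * hrr + (-r) * hss
          _ = _ := e1.symm
      exact_mod_cast this
    have hlead : f.coeff 2 = 1 := by
      have := hmon.coeff_natDegree; rwa [hn] at this
    have hsum : f.coeff 0 + f.coeff 1 + f.coeff 2 = 4 := by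
      have hf := f.as_sum_range' 3 (by omega)
      rw [hf] at h1
      simpa [Finset.sum_range_succ, eval_monomial] using h1
    have hc01 : f.coeff 0 = 1 ∨ f.coeff 0 = -1 :=
      Int.eq_one_or_neg_one_of_mul_eq_one hc2
    have hc0 : f.coeff 0 = 1 := by rcases hc01 with h | h <;> rw [h] at hac <;> omega
    have hc1 : f.coeff 1 = 2 := by omega
    have hfeq : f = Polynomial.cyclotomic 2 ℤ ^ 2 := by
      rw [cyclotomic_two]
      have hf := f.as_sum_range' 3 (by omega)
      rw [hf]
      simp [Finset.sum_range_succ, hc0, hc1, hlead, ← Polynomial.C_mul_X_pow_eq_monomial,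
        monomial_zero_left]
      ring
    refine ⟨Or.inl hfeq, [2, 2], by simp, ?_⟩
    rw [hfeq, cyclotomic_two]
    simp [psi_two]
    ring
  · -- degree 3
    obtain ⟨r, s, t, hrst⟩ := Multiset.card_eq_three.mp hcard
    have hexp : F = C (-(r*s*t)) + C (r*s + r*t + s*t) * X + C (-(r+s+t)) * X ^ 2 + X ^ 3 := by
      rw [hFeq, hrst]
      simp only [Multiset.insert_eq_cons, Multiset.map_cons, Multiset.map_singleton,
        Multiset.prod_cons, Multiset.prod_singleton, map_neg, map_add, map_mul]
      ring
    have e0 : (f.coeff 0 : ℂ) = -(r * s * t) := by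
      rw [← hcoeff, hexp]; simp [coeff_X_pow, coeff_mul_X_pow', coeff_C]
    have e1 : (f.coeff 1 : ℂ) = r*s + r*t + s*t := by
      rw [← hcoeff, hexp]; simp [coeff_X_pow, coeff_mul_X_pow', coeff_C]
    have e2 : (f.coeff 2 : ℂ) = -(r + s + t) := by
      rw [← hcoeff, hexp]; simp [coeff_X_pow, coeff_mul_X_pow', coeff_C]
    have e0' : (f.coeff 0 : ℂ)
        = -((starRingEnd ℂ) r * (starRingEnd ℂ) s * (starRingEnd ℂ) t) := by
      rw [← hconj 0, e0]; simp
    have e2' : (f.coeff 2 : ℂ)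
        = -((starRingEnd ℂ) r + (starRingEnd ℂ) s + (starRingEnd ℂ) t) := by
      rw [← hconj 2, e2]; simp
    have hrr := hroot r (by rw [hrst]; simp)
    have hss := hroot s (by rw [hrst]; simp)
    have htt := hroot t (by rw [hrst]; simp)
    have hc2 : f.coeff 0 * f.coeff 0 = 1 := by
      have : (f.coeff 0 : ℂ) * (f.coeff 0 : ℂ) = 1 :=
        calc (f.coeff 0 : ℂ) * (f.coeff 0 : ℂ)
            = (-(r*s*t)) * (-((starRingEnd ℂ) r * (starRingEnd ℂ) s * (starRingEnd ℂ) t)) := by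
              rw [← e0, ← e0']
          _ = 1 := by
              linear_combination ((starRingEnd ℂ) s * s * (starRingEnd ℂ) t * t) * hrr
                + ((starRingEnd ℂ) t * t) * hss + htt
      exact_mod_cast this
    have hac : f.coeff 2 * f.coeff 0 = f.coeff 1 := by
      have : (f.coeff 2 : ℂ) * (f.coeff 0 : ℂ) = (f.coeff 1 : ℂ) :=
        calc (f.coeff 2 : ℂ) * (f.coeff 0 : ℂ)
            = -((starRingEnd ℂ) r + (starRingEnd ℂ) s + (starRingEnd ℂ) t) * (-(r*s*t)) := by
              rw [← e2', ← e0]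
          _ = r*s + r*t + s*t := by
              linear_combination (s*t) * hrr + (r*t) * hss + (r*s) * htt
          _ = _ := e1.symm
      exact_mod_cast this
    have hlead : f.coeff 3 = 1 := by
      have := hmon.coeff_natDegree; rwa [hn] at this
    have hsum : f.coeff 0 + f.coeff 1 + f.coeff 2 + f.coeff 3 = 4 := by
      have hf := f.as_sum_range' 4 (by omega)
      rw [hf] at h1
      simpa [Finset.sum_range_succ, eval_monomial] using h1
    have hc01 : f.coeff 0 = 1 ∨ f.coeff 0 = -1 :=
      Int.eq_one_or_neg_one_of_mul_eq_one hc2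
    have hc0 : f.coeff 0 = 1 := by rcases hc01 with h | h <;> rw [h] at hac <;> omega
    have hc1 : f.coeff 1 = 1 := by rw [hc0] at hac; omega
    have hcc2 : f.coeff 2 = 1 := by omega
    have hfeq : f = Polynomial.cyclotomic 2 ℤ * Polynomial.cyclotomic 4 ℤ := by
      rw [cyclotomic_two, cyc4]
      have hf := f.as_sum_range' 4 (by omega)
      rw [hf]
      simp [Finset.sum_range_succ, hc0, hc1, hcc2, hlead, ← Polynomial.C_mul_X_pow_eq_monomial,
        monomial_zero_left]
      ring
    refine ⟨Or.inr hfeq, [4], by simp, ?_⟩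
    rw [hfeq, cyclotomic_two, cyc4]
    simp [psi_four]
    ring
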